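/- Directional mean-value bound (Lemma on sup-norm differences): let f : ℝ^K → ℝ^K be continuously differentiable. Then for all x, x* ∈ ℝ^K, ‖f(x) − f(x*)‖_∞ ≤ C · (‖max{x,x*} − x‖_∞ + ‖max{x,x*} − x*‖_∞) ≤ 2C‖x − x*‖_∞, where C = sup over subsets I ⊆ {1,…,K} and points y of ‖Σ_{i∈I} ∂f(y)/∂x_i‖_∞, and max{x,x*} denotes the componentwise maximum. -/

import Mathlib

open Finset

lemma key_aux {K : ℕ} (L : (Fin K → ℝ) →L[ℝ] (Fin K → ℝ)) (C : ℝ)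
    (hL : ∀ s : Finset (Fin K), ‖∑ i ∈ s, L (Pi.single i 1)‖ ≤ C) :
    ∀ n : ℕ, ∀ v : Fin K → ℝ, (∀ i, 0 ≤ v i) →
      (univ.filter fun i => v i ≠ 0).card ≤ n → ‖L v‖ ≤ C * ‖v‖ := by
  have hC0 : 0 ≤ C := by
    have := hL ∅
    simpa using this
  intro n
  induction n with
  | zero =>
    intro v hv hcard
    have hs : (univ.filter fun i => v i ≠ 0) = ∅ :=
      Finset.card_eq_zero.mp (Nat.le_zero.mp hcard)
    have hv0 : v = 0 := by
      funext i
      by_contra h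
      simp only [Pi.zero_apply] at h
      have hi : i ∈ univ.filter fun i => v i ≠ 0 := by simpa using h
      rw [hs] at hi
      exact absurd hi (Finset.notMem_empty i)
    simp [hv0]
  | succ n ih =>
    intro v hv hcard
    set s := univ.filter fun i => v i ≠ 0 with hs_def
    rcases s.eq_empty_or_nonempty with hse | hsne
    · have hv0 : v = 0 := by
        funext i
        by_contra h
        simp only [Pi.zero_apply] at h
        have hi : i ∈ s := by simp [hs_def, h]
        rw [hse] at hi
        exact absurd hi (Finset.notMem_empty i)
      simp [hv0]
    · obtain ⟨i0, hi0s, hmin⟩ := s.exists_min_image v hsne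
      have hvi0 : v i0 ≠ 0 := by
        have := hi0s
        simp [hs_def] at this
        exact this
      set c := v i0 with hc_def
      have hc0 : 0 < c := lt_of_le_of_ne (hv i0) (Ne.symm hvi0)
      set w : Fin K → ℝ := fun i => if i ∈ s then v i - c else 0 with hw_def
      have hw0 : ∀ i, 0 ≤ w i := by
        intro i
        by_cases h : i ∈ s
        · simp only [hw_def, h, if_true]
          exact sub_nonneg.mpr (hmin i h)
        · simp [hw_def, h]
      have hwsupp : (univ.filter fun i => w i ≠ 0) ⊆ s.erase i0 := by
        intro i hi
        simp only [Finset.mem_filter, Finset.mem_univ, true_and] at hi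
        have his : i ∈ s := by
          by_contra h
          exact hi (by simp [hw_def, h])
        have hne : i ≠ i0 := by
          intro h
          subst h
          exact hi (by simp [hw_def, his, hc_def])
        exact Finset.mem_erase.mpr ⟨hne, his⟩
      have hwcard : (univ.filter fun i => w i ≠ 0).card ≤ n := by
        have h1 : (univ.filter fun i => w i ≠ 0).card ≤ (s.erase i0).card :=
          Finset.card_le_card hwsupp
        have h2 : (s.erase i0).card = s.card - 1 := Finset.card_erase_of_mem hi0s
        have h3 : 1 ≤ s.card := Finset.card_pos.mpr hsne
        omega
      have hind : (∑ i ∈ s, Pi.single i (1:ℝ)) = fun j => if j ∈ s then (1:ℝ) else 0 := by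
        funext j
        rw [Finset.sum_apply]
        simp only [Pi.single_apply]
        exact Finset.sum_ite_eq s j (fun _ => (1:ℝ))
      have hv_eq : v = w + c • (∑ i ∈ s, Pi.single i (1:ℝ)) := by
        funext j
        simp only [Pi.add_apply, Pi.smul_apply, hind, smul_eq_mul, hw_def]
        by_cases h : j ∈ s
        · simp [h]
        · have : v j = 0 := by
            by_contra hne
            exact h (by simp [hs_def, hne])
          simp [h, this]
      have hLind : ‖L (∑ i ∈ s, Pi.single i (1:ℝ))‖ ≤ C := by
        rw [map_sum]
        exact hL s
      have hcv : c ≤ ‖v‖ := by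
        calc c = v i0 := rfl
          _ ≤ |v i0| := le_abs_self _
          _ = ‖v i0‖ := (Real.norm_eq_abs _).symm
          _ ≤ ‖v‖ := norm_le_pi_norm v i0
      have hwnorm : ‖w‖ ≤ ‖v‖ - c := by
        apply pi_norm_le_iff_of_nonneg (by linarith) |>.mpr
        intro i
        rw [Real.norm_eq_abs, abs_of_nonneg (hw0 i)]
        by_cases h : i ∈ s
        · simp only [hw_def, h, if_true]
          have : v i ≤ ‖v‖ := le_trans (le_abs_self _)
            (le_trans (le_of_eq (Real.norm_eq_abs _).symm) (norm_le_pi_norm v i))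
          linarith
        · simp only [hw_def, h, if_false]
          linarith
      have hIH : ‖L w‖ ≤ C * ‖w‖ := ih w hw0 hwcard
      calc ‖L v‖ = ‖L w + c • L (∑ i ∈ s, Pi.single i (1:ℝ))‖ := by
            rw [hv_eq]; rw [map_add, map_smul]
        _ ≤ ‖L w‖ + ‖c • L (∑ i ∈ s, Pi.single i (1:ℝ))‖ := norm_add_le _ _
        _ = ‖L w‖ + c * ‖L (∑ i ∈ s, Pi.single i (1:ℝ))‖ := by
            rw [norm_smul, Real.norm_eq_abs, abs_of_pos hc0]
        _ ≤ C * ‖w‖ + c * C := by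
            have := mul_le_mul_of_nonneg_left hLind (le_of_lt hc0)
            linarith
        _ ≤ C * (‖v‖ - c) + c * C := by
            have := mul_le_mul_of_nonneg_left hwnorm hC0
            linarith
        _ = C * ‖v‖ := by ring

lemma key_dir {K : ℕ} (f : (Fin K → ℝ) → Fin K → ℝ) (C : ℝ)
    (hC : ∀ (s : Finset (Fin K)) (y : Fin K → ℝ),
      ‖∑ i ∈ s, fderiv ℝ f y (Pi.single i 1)‖ ≤ C)
    (y v : Fin K → ℝ) (hv : ∀ i, 0 ≤ v i) : ‖fderiv ℝ f y v‖ ≤ C * ‖v‖ :=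
  key_aux (fderiv ℝ f y) C (fun s => hC s y) _ v hv le_rfl

lemma seg_bound {K : ℕ} (f : (Fin K → ℝ) → Fin K → ℝ) (C : ℝ)
    (hf : ContDiff ℝ 1 f)
    (hC : ∀ (s : Finset (Fin K)) (y : Fin K → ℝ),
      ‖∑ i ∈ s, fderiv ℝ f y (Pi.single i 1)‖ ≤ C)
    (x z : Fin K → ℝ) (hxz : ∀ i, x i ≤ z i) :
    ‖f z - f x‖ ≤ C * ‖z - x‖ := by
  have hd : Differentiable ℝ f := hf.differentiable one_ne_zero
  set g : ℝ → (Fin K → ℝ) := fun t => f (x + t • (z - x)) with hg_def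
  have hg : ∀ t ∈ Set.Icc (0:ℝ) 1,
      HasDerivWithinAt g (fderiv ℝ f (x + t • (z - x)) (z - x)) (Set.Icc (0:ℝ) 1) t := by
    intro t _
    have h1 : HasDerivAt (fun t : ℝ => x + t • (z - x)) (z - x) t := by
      simpa using ((hasDerivAt_id t).smul_const (z - x)).const_add x
    exact ((hd _).hasFDerivAt.comp_hasDerivAt t h1).hasDerivWithinAt
  have hbound : ∀ t ∈ Set.Ico (0:ℝ) 1,
      ‖fderiv ℝ f (x + t • (z - x)) (z - x)‖ ≤ C * ‖z - x‖ := by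
    intro t _
    exact key_dir f C hC _ (z - x) (fun i => sub_nonneg.mpr (hxz i))
  have := norm_image_sub_le_of_norm_deriv_le_segment' hg hbound 1
    (Set.right_mem_Icc.mpr zero_le_one)
  have hg1 : g 1 = f z := by simp [hg_def]
  have hg0 : g 0 = f x := by simp [hg_def]
  rw [hg1, hg0] at this
  simpa using this

theorem stmt9 {K : ℕ} (f : (Fin K → ℝ) → Fin K → ℝ) (C : ℝ)
    (hf : ContDiff ℝ 1 f)
    (hC : ∀ (s : Finset (Fin K)) (y : Fin K → ℝ),
      ‖∑ i ∈ s, fderiv ℝ f y (Pi.single i 1)‖ ≤ C) :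
    ∀ x xs : Fin K → ℝ,
      ‖f x - f xs‖ ≤ C * (‖(fun i => max (x i) (xs i)) - x‖
          + ‖(fun i => max (x i) (xs i)) - xs‖) ∧
      C * (‖(fun i => max (x i) (xs i)) - x‖ + ‖(fun i => max (x i) (xs i)) - xs‖)
          ≤ 2 * C * ‖x - xs‖ := by
  intro x xs
  have hC0 : 0 ≤ C := by
    have := hC ∅ 0
    simpa using this
  set m : Fin K → ℝ := fun i => max (x i) (xs i) with hm_def
  have h1 : ‖f m - f x‖ ≤ C * ‖m - x‖ :=
    seg_bound f C hf hC x m (fun i => le_max_left _ _)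
  have h2 : ‖f m - f xs‖ ≤ C * ‖m - xs‖ :=
    seg_bound f C hf hC xs m (fun i => le_max_right _ _)
  have hsplit : f x - f xs = (f m - f xs) - (f m - f x) := by abel
  have hmain : ‖f x - f xs‖ ≤ C * (‖m - x‖ + ‖m - xs‖) := by
    rw [hsplit]
    calc ‖(f m - f xs) - (f m - f x)‖ ≤ ‖f m - f xs‖ + ‖f m - f x‖ := norm_sub_le _ _
      _ ≤ C * ‖m - xs‖ + C * ‖m - x‖ := add_le_add h2 h1
      _ = C * (‖m - x‖ + ‖m - xs‖) := by ring
  have hmx : ‖m - x‖ ≤ ‖x - xs‖ := by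
    apply pi_norm_le_iff_of_nonneg (norm_nonneg _) |>.mpr
    intro i
    have : ‖(m - x) i‖ ≤ ‖(x - xs) i‖ := by
      simp only [Pi.sub_apply, hm_def, Real.norm_eq_abs]
      rcases le_total (x i) (xs i) with h | h
      · rw [max_eq_right h, abs_sub_comm]
      · rw [max_eq_left h]
        simp [abs_nonneg]
    exact le_trans this (norm_le_pi_norm (x - xs) i)
  have hmxs : ‖m - xs‖ ≤ ‖x - xs‖ := by
    apply pi_norm_le_iff_of_nonneg (norm_nonneg _) |>.mpr
    intro i
    have : ‖(m - xs) i‖ ≤ ‖(x - xs) i‖ := by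
      simp only [Pi.sub_apply, hm_def, Real.norm_eq_abs]
      rcases le_total (x i) (xs i) with h | h
      · rw [max_eq_right h]
        simp [abs_nonneg]
      · rw [max_eq_left h]
    exact le_trans this (norm_le_pi_norm (x - xs) i)
  refine ⟨hmain, ?_⟩
  calc C * (‖m - x‖ + ‖m - xs‖) ≤ C * (‖x - xs‖ + ‖x - xs‖) :=
        mul_le_mul_of_nonneg_left (by linarith) hC0
    _ = 2 * C * ‖x - xs‖ := by ring
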